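/- If x is a vertex of P_ASEP(n) containing a λ-loop between v₁ and v₂, then x' = x ↑^{v₃} (v₁,v₂), obtained by the λ-loop breaking procedure, is a vertex of P_ASEP(n+1). -/

import Mathlib

open Finset

/-- The Asymmetric Subtour Elimination Polytope on `n` nodes. -/
def PASEP (n : ℕ) (x : Fin n → Fin n → ℝ) : Prop :=
  (∀ i j, 0 ≤ x i j) ∧ (∀ i, x i i = 0) ∧
  (∀ j, ∑ i, x i j = 1) ∧ (∀ i, ∑ j, x i j = 1) ∧
  ∀ S : Finset (Fin n), 2 ≤ S.card → S.card ≤ n - 2 →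
    1 ≤ ∑ i ∈ S, ∑ j ∈ Sᶜ, x i j

private lemma sum_compl_eq {n : ℕ} (w : Fin n → Fin n → ℝ)
    (hrow : ∀ i, ∑ j, w i j = 1) (S : Finset (Fin n)) :
    ∑ i ∈ S, ∑ j ∈ Sᶜ, w i j = S.card - ∑ i ∈ S, ∑ j ∈ S, w i j := by
  have h : ∀ i ∈ S, ∑ j ∈ Sᶜ, w i j = 1 - ∑ j ∈ S, w i j := by
    intro i _
    have := Finset.sum_add_sum_compl S (w i)
    rw [hrow i] at this
    linarith
  rw [Finset.sum_congr rfl h, Finset.sum_sub_distrib, Finset.sum_const, nsmul_eq_mul, mul_one]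

private lemma inner_le_card {n : ℕ} (w : Fin n → Fin n → ℝ)
    (hnn : ∀ i j, 0 ≤ w i j) (hrow : ∀ i, ∑ j, w i j = 1) (S : Finset (Fin n)) :
    ∑ i ∈ S, ∑ j ∈ S, w i j ≤ S.card := by
  calc ∑ i ∈ S, ∑ j ∈ S, w i j ≤ ∑ i ∈ S, (1:ℝ) := by
        apply Finset.sum_le_sum; intro i _
        rw [← hrow i]
        exact Finset.sum_le_sum_of_subset_of_nonneg (Finset.subset_univ S) (fun j _ _ => hnn i j)
    _ = S.card := by simp

private lemma inner_le_pred {n : ℕ} (x : Fin n → Fin n → ℝ) (hx : PASEP n x)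
    (S : Finset (Fin n)) (h1 : 1 ≤ S.card) (h2 : S.card < n) :
    ∑ i ∈ S, ∑ j ∈ S, x i j ≤ (S.card : ℝ) - 1 := by
  obtain ⟨hnn, hdiag, hcol, hrow, hsub⟩ := hx
  by_cases hc1 : S.card = 1
  · obtain ⟨a, rfl⟩ := Finset.card_eq_one.mp hc1
    simp [hdiag a]
  · by_cases hc2 : S.card + 2 ≤ n
    · have hs := hsub S (by omega) (by omega)
      have he := sum_compl_eq x hrow S
      linarith
    · have hcard : Sᶜ.card = 1 := by
        have := Finset.card_compl S
        simp only [Fintype.card_fin] at this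
        omega
      obtain ⟨w, hw⟩ := Finset.card_eq_one.mp hcard
      have hin : ∀ i ∈ S, ∑ j ∈ S, x i j = 1 - x i w := by
        intro i _
        have := Finset.sum_add_sum_compl S (x i)
        rw [hrow i, hw, Finset.sum_singleton] at this
        linarith
      have hsw : ∑ i ∈ S, x i w = 1 := by
        have h3 := Finset.sum_add_sum_compl S (fun i => x i w)
        rw [hw, Finset.sum_singleton] at h3
        simp only [hcol w, hdiag w] at h3
        linarith
      apply le_of_eq
      calc ∑ i ∈ S, ∑ j ∈ S, x i j = ∑ i ∈ S, (1 - x i w) := Finset.sum_congr rfl hin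
        _ = S.card - ∑ i ∈ S, x i w := by
            rw [Finset.sum_sub_distrib, Finset.sum_const, nsmul_eq_mul, mul_one]
        _ = (S.card:ℝ) - 1 := by rw [hsw]

private lemma sum_sum_ite {γ : Type*} [DecidableEq γ] (T : Finset γ) (a b : γ) (r : ℝ) :
    ∑ u ∈ T, ∑ v ∈ T, (if u = a ∧ v = b then r else 0) = if a ∈ T ∧ b ∈ T then r else 0 := by
  have h : ∀ u ∈ T, ∑ v ∈ T, (if u = a ∧ v = b then r else 0)
      = if u = a then (if b ∈ T then r else 0) else 0 := by
    intro u _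
    by_cases hu : u = a
    · simp only [hu, true_and]
      exact Finset.sum_ite_eq' T b (fun _ => r)
    · simp [hu]
  rw [Finset.sum_congr rfl h, Finset.sum_ite_eq' T a]
  by_cases h1 : a ∈ T <;> by_cases h2 : b ∈ T <;> simp [h1, h2]

private lemma sum_split {n : ℕ} {M : Type*} [AddCommMonoid M] (S : Finset (Fin (n+1)))
    (f : Fin (n+1) → M) :
    ∑ i ∈ S, f i = ∑ u ∈ univ.filter (fun u : Fin n => u.castSucc ∈ S), f u.castSucc
      + (if Fin.last n ∈ S then f (Fin.last n) else 0) := by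
  have h0 : ∑ i ∈ S, f i = ∑ i, (if i ∈ S then f i else 0) := by
    rw [Finset.sum_ite_mem]; simp
  rw [h0, Fin.sum_univ_castSucc (f := fun i => if i ∈ S then f i else 0), Finset.sum_filter]

private lemma card_split {n : ℕ} (S : Finset (Fin (n+1))) :
    S.card = (univ.filter (fun u : Fin n => u.castSucc ∈ S)).card
      + (if Fin.last n ∈ S then 1 else 0) := by
  rw [Finset.card_eq_sum_ones, sum_split S (fun _ => 1), Finset.card_eq_sum_ones]

/-- The `λ`-loop breaking procedure `x ↑^{v₃} (v₁, v₂)`: a new node `v₃`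
(the last element of `Fin (n+1)`; old nodes are embedded via `Fin.castSucc`)
is inserted into the `λ`-loop between `v₁` and `v₂`, with
`x'_{v₁v₃} = x'_{v₃v₂} = λ`, `x'_{v₃v₁} = x'_{v₂v₃} = 1 − λ`,
`x'_{v₁v₂} = x'_{v₂v₁} = 0`, all other arcs incident to `v₃` zero, and all other
entries unchanged. -/
def breakLoop (n : ℕ) (x : Fin n → Fin n → ℝ) (v₁ v₂ : Fin n) (lam : ℝ) :
    Fin (n + 1) → Fin (n + 1) → ℝ := fun u v =>
  if hu : u = Fin.last n then
    (if hv : v = Fin.last n then 0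
     else if v.castPred hv = v₂ then lam
     else if v.castPred hv = v₁ then 1 - lam
     else 0)
  else if hv : v = Fin.last n then
    (if u.castPred hu = v₁ then lam
     else if u.castPred hu = v₂ then 1 - lam
     else 0)
  else if u.castPred hu = v₁ ∧ v.castPred hv = v₂ then 0
  else if u.castPred hu = v₂ ∧ v.castPred hv = v₁ then 0
  else x (u.castPred hu) (v.castPred hv)


section Entries

variable {n : ℕ} (x : Fin n → Fin n → ℝ) (v₁ v₂ : Fin n) (lam : ℝ)

private lemma bl_cc (u v : Fin n) :
    breakLoop n x v₁ v₂ lam u.castSucc v.castSucc =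
      if u = v₁ ∧ v = v₂ then 0 else if u = v₂ ∧ v = v₁ then 0 else x u v := by
  have hu := (Fin.castSucc_lt_last u).ne
  have hv := (Fin.castSucc_lt_last v).ne
  simp [breakLoop, hu, hv, Fin.castPred_castSucc]
  by_cases h1 : u = v₁ <;> by_cases h2 : v = v₂ <;> by_cases h3 : u = v₂ <;>
    by_cases h4 : v = v₁ <;> simp_all

private lemma bl_cl (u : Fin n) :
    breakLoop n x v₁ v₂ lam u.castSucc (Fin.last n) =
      if u = v₁ then lam else if u = v₂ then 1 - lam else 0 := by
  have hu := (Fin.castSucc_lt_last u).ne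
  simp [breakLoop, hu, Fin.castPred_castSucc]
  by_cases h1 : u = v₁ <;> by_cases h2 : u = v₂ <;> simp_all

private lemma bl_lc (v : Fin n) :
    breakLoop n x v₁ v₂ lam (Fin.last n) v.castSucc =
      if v = v₂ then lam else if v = v₁ then 1 - lam else 0 := by
  have hv := (Fin.castSucc_lt_last v).ne
  simp [breakLoop, hv, Fin.castPred_castSucc]
  by_cases h1 : v = v₁ <;> by_cases h2 : v = v₂ <;> simp_all

private lemma bl_ll : breakLoop n x v₁ v₂ lam (Fin.last n) (Fin.last n) = 0 := by
  simp [breakLoop]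

private lemma bl_cl' (hne : v₁ ≠ v₂) (u : Fin n) :
    breakLoop n x v₁ v₂ lam u.castSucc (Fin.last n) =
      (if u = v₁ then lam else 0) + (if u = v₂ then 1 - lam else 0) := by
  rw [bl_cl]
  by_cases h1 : u = v₁
  · subst h1; simp [hne]
  · by_cases h2 : u = v₂ <;> simp [h1, h2, Ne.symm hne]

private lemma bl_lc' (hne : v₁ ≠ v₂) (v : Fin n) :
    breakLoop n x v₁ v₂ lam (Fin.last n) v.castSucc =
      (if v = v₂ then lam else 0) + (if v = v₁ then 1 - lam else 0) := by
  rw [bl_lc]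
  by_cases h2 : v = v₂
  · subst h2; simp [Ne.symm hne]
  · by_cases h1 : v = v₁ <;> simp [h1, h2, hne]

private lemma bl_cc' (hne : v₁ ≠ v₂) (ha : x v₁ v₂ = lam) (hb : x v₂ v₁ = 1 - lam)
    (u v : Fin n) :
    breakLoop n x v₁ v₂ lam u.castSucc v.castSucc =
      x u v - ((if u = v₁ ∧ v = v₂ then lam else 0) + (if u = v₂ ∧ v = v₁ then 1 - lam else 0)) := by
  rw [bl_cc]
  by_cases h1 : u = v₁ ∧ v = v₂
  · obtain ⟨rfl, rfl⟩ := h1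
    simp [hne, ha, Ne.symm hne]
  · by_cases h2 : u = v₂ ∧ v = v₁
    · obtain ⟨rfl, rfl⟩ := h2
      simp [h1, hb]
    · simp [h1, h2]

end Entries

private lemma sum_ite_const {γ : Type*} (T : Finset γ) (P : Prop) [Decidable P] (f : γ → ℝ) :
    ∑ u ∈ T, (if P then f u else 0) = if P then ∑ u ∈ T, f u else 0 := by
  by_cases h : P <;> simp [h]

private lemma sum_ite_and₂ {γ : Type*} [DecidableEq γ] (T : Finset γ) (b : γ) (P : Prop)
    [Decidable P] (r : ℝ) :
    ∑ v ∈ T, (if P ∧ v = b then r else 0) = if P ∧ b ∈ T then r else 0 := by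
  by_cases h : P
  · simp only [h, true_and]; exact Finset.sum_ite_eq' T b (fun _ => r)
  · simp [h]

private lemma sum_ite_and₁ {γ : Type*} [DecidableEq γ] (T : Finset γ) (a : γ) (P : Prop)
    [Decidable P] (r : ℝ) :
    ∑ u ∈ T, (if u = a ∧ P then r else 0) = if a ∈ T ∧ P then r else 0 := by
  by_cases h : P
  · simp only [h, and_true]; exact Finset.sum_ite_eq' T a (fun _ => r)
  · simp [h]

private lemma breakLoop_rows {n : ℕ} (x : Fin n → Fin n → ℝ)
    (hrow : ∀ i, ∑ j, x i j = 1) (v₁ v₂ : Fin n) (hne : v₁ ≠ v₂) (lam : ℝ)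
    (ha : x v₁ v₂ = lam) (hb : x v₂ v₁ = 1 - lam) :
    ∀ i, ∑ j, breakLoop n x v₁ v₂ lam i j = 1 := by
  intro i
  induction i using Fin.lastCases with
  | last =>
      rw [Fin.sum_univ_castSucc (f := fun j => breakLoop n x v₁ v₂ lam (Fin.last n) j)]
      rw [Finset.sum_congr rfl (fun v _ => bl_lc' x v₁ v₂ lam hne v), bl_ll,
        Finset.sum_add_distrib, Finset.sum_ite_eq' univ v₂, Finset.sum_ite_eq' univ v₁]
      simp
  | cast u =>
      rw [Fin.sum_univ_castSucc (f := fun j => breakLoop n x v₁ v₂ lam u.castSucc j)]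
      rw [Finset.sum_congr rfl (fun v _ => bl_cc' x v₁ v₂ lam hne ha hb u v),
        bl_cl' x v₁ v₂ lam hne u, Finset.sum_sub_distrib, Finset.sum_add_distrib,
        sum_ite_and₂ univ v₂ (u = v₁) lam, sum_ite_and₂ univ v₁ (u = v₂) (1 - lam), hrow u]
      simp only [Finset.mem_univ, and_true]
      ring

private lemma breakLoop_cols {n : ℕ} (x : Fin n → Fin n → ℝ)
    (hcol : ∀ j, ∑ i, x i j = 1) (v₁ v₂ : Fin n) (hne : v₁ ≠ v₂) (lam : ℝ)
    (ha : x v₁ v₂ = lam) (hb : x v₂ v₁ = 1 - lam) :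
    ∀ j, ∑ i, breakLoop n x v₁ v₂ lam i j = 1 := by
  intro j
  induction j using Fin.lastCases with
  | last =>
      rw [Fin.sum_univ_castSucc (f := fun i => breakLoop n x v₁ v₂ lam i (Fin.last n))]
      rw [Finset.sum_congr rfl (fun u _ => bl_cl' x v₁ v₂ lam hne u), bl_ll,
        Finset.sum_add_distrib, Finset.sum_ite_eq' univ v₁, Finset.sum_ite_eq' univ v₂]
      simp
  | cast v =>
      rw [Fin.sum_univ_castSucc (f := fun i => breakLoop n x v₁ v₂ lam i v.castSucc)]
      rw [Finset.sum_congr rfl (fun u _ => bl_cc' x v₁ v₂ lam hne ha hb u v),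
        bl_lc' x v₁ v₂ lam hne v, Finset.sum_sub_distrib, Finset.sum_add_distrib,
        sum_ite_and₁ univ v₁ (v = v₂) lam, sum_ite_and₁ univ v₂ (v = v₁) (1 - lam), hcol v]
      simp only [Finset.mem_univ, true_and]
      ring

private lemma breakLoop_mem {n : ℕ} (hn : 3 ≤ n) (x : Fin n → Fin n → ℝ) (hx : PASEP n x)
    (v₁ v₂ : Fin n) (hne : v₁ ≠ v₂) (lam : ℝ) (h0 : 0 < lam) (h1 : lam < 1)
    (ha : x v₁ v₂ = lam) (hb : x v₂ v₁ = 1 - lam) :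
    PASEP (n + 1) (breakLoop n x v₁ v₂ lam) := by
  obtain ⟨hnn, hdiag, hcol, hrow, hsub⟩ := hx
  have hP : PASEP n x := ⟨hnn, hdiag, hcol, hrow, hsub⟩
  have hrow' := breakLoop_rows x hrow v₁ v₂ hne lam ha hb
  have hcol' := breakLoop_cols x hcol v₁ v₂ hne lam ha hb
  refine ⟨?_, ?_, hcol', hrow', ?_⟩
  · intro i j
    unfold breakLoop
    split_ifs <;> first | linarith | exact hnn _ _
  · intro i
    induction i using Fin.lastCases with
    | last => exact bl_ll x v₁ v₂ lam
    | cast u =>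
        have h12 : ¬(u = v₁ ∧ u = v₂) := by rintro ⟨rfl, h⟩; exact hne h
        have h21 : ¬(u = v₂ ∧ u = v₁) := by rintro ⟨rfl, h⟩; exact hne h.symm
        rw [bl_cc]
        simp [h12, h21, hdiag u]
  · intro S hS2 hSn
    rw [sum_compl_eq _ hrow' S]
    set T := univ.filter (fun u : Fin n => u.castSucc ∈ S) with hT
    have hcards := card_split S
    rw [← hT] at hcards
    have hinner : ∑ i ∈ S, ∑ j ∈ S, breakLoop n x v₁ v₂ lam i j =
        (∑ u ∈ T, ∑ v ∈ T, x u v)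
        - (if v₁ ∈ T ∧ v₂ ∈ T then lam else 0) - (if v₂ ∈ T ∧ v₁ ∈ T then 1 - lam else 0)
        + (if Fin.last n ∈ S then
            ((if v₁ ∈ T then lam else 0) + (if v₂ ∈ T then 1 - lam else 0))
            + ((if v₂ ∈ T then lam else 0) + (if v₁ ∈ T then 1 - lam else 0)) else 0) := by
      rw [sum_split S (f := fun i => ∑ j ∈ S, breakLoop n x v₁ v₂ lam i j)]
      have e1 : ∀ u ∈ T, ∑ j ∈ S, breakLoop n x v₁ v₂ lam u.castSucc j
          = ∑ v ∈ T, (x u v - ((if u = v₁ ∧ v = v₂ then lam else 0)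
              + (if u = v₂ ∧ v = v₁ then 1 - lam else 0)))
            + (if Fin.last n ∈ S then
                (if u = v₁ then lam else 0) + (if u = v₂ then 1 - lam else 0) else 0) := by
        intro u _
        rw [sum_split S (f := fun j => breakLoop n x v₁ v₂ lam u.castSucc j)]
        rw [Finset.sum_congr rfl (fun v _ => bl_cc' x v₁ v₂ lam hne ha hb u v),
          bl_cl' x v₁ v₂ lam hne u]
      have e2 : ∑ j ∈ S, breakLoop n x v₁ v₂ lam (Fin.last n) j
          = ∑ v ∈ T, ((if v = v₂ then lam else 0) + (if v = v₁ then 1 - lam else 0)) := by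
        rw [sum_split S (f := fun j => breakLoop n x v₁ v₂ lam (Fin.last n) j)]
        rw [Finset.sum_congr rfl (fun v _ => bl_lc' x v₁ v₂ lam hne v), bl_ll]
        simp
        rfl
      rw [Finset.sum_congr rfl e1, e2]
      simp only [Finset.sum_sub_distrib, Finset.sum_add_distrib, sum_ite_and₂, sum_ite_and₁,
        Finset.sum_ite_eq', sum_ite_const]
      by_cases hL : Fin.last n ∈ S <;>
        by_cases hb1 : v₁ ∈ T <;> by_cases hb2 : v₂ ∈ T <;>
        simp [hL, hb1, hb2] <;> ring
    rw [hinner]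
    by_cases hL : Fin.last n ∈ S
    · simp only [hL, if_true] at hcards ⊢
      have hTn : T.card < n := by omega
      have hcR : (S.card : ℝ) = (T.card : ℝ) + 1 := by rw [hcards]; push_cast; ring
      by_cases hb1 : v₁ ∈ T
      · have hbd := inner_le_pred x hP T (Finset.card_pos.mpr ⟨v₁, hb1⟩) hTn
        by_cases hb2 : v₂ ∈ T <;> simp only [hb1, hb2, and_true, and_false, true_and,
          false_and, if_true, if_false] <;> linarith
      · by_cases hb2 : v₂ ∈ T
        · have hbd := inner_le_pred x hP T (Finset.card_pos.mpr ⟨v₂, hb2⟩) hTn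
          simp only [hb1, hb2, and_true, and_false, true_and, false_and, if_true, if_false]
          linarith
        · have hbd := inner_le_card x hnn hrow T
          simp only [hb1, hb2, and_true, and_false, true_and, false_and, if_true, if_false]
          linarith
    · simp only [hL, if_false] at hcards ⊢
      have hT1 : 1 ≤ T.card := by omega
      have hTn : T.card < n := by omega
      have hbd := inner_le_pred x hP T hT1 hTn
      have hcR : (S.card : ℝ) = (T.card : ℝ) := by rw [hcards]; norm_num
      by_cases hb1 : v₁ ∈ T <;> by_cases hb2 : v₂ ∈ T <;>
        simp only [hb1, hb2, and_true, and_false, true_and, false_and, if_true, if_false] <;>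
        linarith

def collapse {n : ℕ} (v₁ v₂ : Fin n) (y : Fin (n+1) → Fin (n+1) → ℝ) : Fin n → Fin n → ℝ :=
  fun u v => if u = v₁ ∧ v = v₂ then y v₁.castSucc (Fin.last n)
    else if u = v₂ ∧ v = v₁ then 1 - y v₁.castSucc (Fin.last n)
    else y u.castSucc v.castSucc

private lemma collapse_props {n : ℕ} (hn : 3 ≤ n) (v₁ v₂ : Fin n) (hne : v₁ ≠ v₂)
    (y : Fin (n+1) → Fin (n+1) → ℝ) (hy : PASEP (n+1) y)
    (h12 : y v₁.castSucc v₂.castSucc = 0) (h21 : y v₂.castSucc v₁.castSucc = 0)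
    (hcl : ∀ u : Fin n, u ≠ v₁ → u ≠ v₂ → y u.castSucc (Fin.last n) = 0)
    (hlc : ∀ v : Fin n, v ≠ v₁ → v ≠ v₂ → y (Fin.last n) v.castSucc = 0) :
    PASEP n (collapse v₁ v₂ y) ∧
    y v₂.castSucc (Fin.last n) = 1 - y v₁.castSucc (Fin.last n) ∧
    y (Fin.last n) v₂.castSucc = y v₁.castSucc (Fin.last n) ∧
    y (Fin.last n) v₁.castSucc = 1 - y v₁.castSucc (Fin.last n) := by
  obtain ⟨hnn, hdiag, hcol, hrow, hsub⟩ := hy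
  have hyP : PASEP (n+1) y := ⟨hnn, hdiag, hcol, hrow, hsub⟩
  set a := y v₁.castSucc (Fin.last n) with hadef
  set b := y v₂.castSucc (Fin.last n) with hbdef
  set c := y (Fin.last n) v₂.castSucc with hcdef
  set d := y (Fin.last n) v₁.castSucc with hddef
  have pcl : ∀ u : Fin n, y u.castSucc (Fin.last n)
      = (if u = v₁ then a else 0) + (if u = v₂ then b else 0) := by
    intro u
    by_cases e1 : u = v₁
    · subst e1; simp [hne, hadef]
    · by_cases e2 : u = v₂
      · subst e2; simp [Ne.symm hne, hbdef]
      · simp [e1, e2, hcl u e1 e2]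
  have plc : ∀ v : Fin n, y (Fin.last n) v.castSucc
      = (if v = v₂ then c else 0) + (if v = v₁ then d else 0) := by
    intro v
    by_cases e2 : v = v₂
    · subst e2; simp [Ne.symm hne, hcdef]
    · by_cases e1 : v = v₁
      · subst e1; simp [hne, hddef]
      · simp [e1, e2, hlc v e1 e2]
  have hab : a + b = 1 := by
    have h := hcol (Fin.last n)
    rw [Fin.sum_univ_castSucc (f := fun i => y i (Fin.last n)),
      Finset.sum_congr rfl (fun u (_ : u ∈ univ) => pcl u), Finset.sum_add_distrib,
      Finset.sum_ite_eq' univ v₁, Finset.sum_ite_eq' univ v₂, hdiag (Fin.last n)] at h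
    simpa using h
  have hcd : c + d = 1 := by
    have h := hrow (Fin.last n)
    rw [Fin.sum_univ_castSucc (f := fun j => y (Fin.last n) j),
      Finset.sum_congr rfl (fun v (_ : v ∈ univ) => plc v), Finset.sum_add_distrib,
      Finset.sum_ite_eq' univ v₂, Finset.sum_ite_eq' univ v₁, hdiag (Fin.last n)] at h
    simpa using h
  have pair1 : a + d ≤ 1 := by
    have hcs := (Fin.castSucc_lt_last v₁).ne
    have hs := hsub {v₁.castSucc, Fin.last n} (by rw [Finset.card_pair hcs])
      (by rw [Finset.card_pair hcs]; omega)
    rw [sum_compl_eq y hrow, Finset.card_pair hcs, Finset.sum_pair hcs,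
      Finset.sum_pair hcs, Finset.sum_pair hcs, hdiag, hdiag] at hs
    norm_num at hs
    linarith
  have pair2 : b + c ≤ 1 := by
    have hcs := (Fin.castSucc_lt_last v₂).ne
    have hs := hsub {v₂.castSucc, Fin.last n} (by rw [Finset.card_pair hcs])
      (by rw [Finset.card_pair hcs]; omega)
    rw [sum_compl_eq y hrow, Finset.card_pair hcs, Finset.sum_pair hcs,
      Finset.sum_pair hcs, Finset.sum_pair hcs, hdiag, hdiag] at hs
    norm_num at hs
    linarith
  have hb1 : b = 1 - a := by linarith
  have hc1 : c = a := by linarith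
  have hd1 : d = 1 - a := by linarith
  have pcoll : ∀ u v : Fin n, collapse v₁ v₂ y u v
      = y u.castSucc v.castSucc + (if u = v₁ ∧ v = v₂ then a else 0)
        + (if u = v₂ ∧ v = v₁ then 1 - a else 0) := by
    intro u v
    unfold collapse
    by_cases e1 : u = v₁ ∧ v = v₂
    · obtain ⟨rfl, rfl⟩ := e1
      simp [hne, Ne.symm hne, h12, hadef]
    · by_cases e2 : u = v₂ ∧ v = v₁
      · obtain ⟨rfl, rfl⟩ := e2
        simp [e1, h21, hadef]
      · simp [e1, e2]
  have cnn : ∀ i j, 0 ≤ collapse v₁ v₂ y i j := by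
    have hannn : 0 ≤ a := hnn _ _
    have hbnn : 0 ≤ b := hnn _ _
    intro i j; unfold collapse; split_ifs <;> first | exact hnn _ _ | linarith
  have cdiag : ∀ i, collapse v₁ v₂ y i i = 0 := by
    intro i
    have e1 : ¬(i = v₁ ∧ i = v₂) := by rintro ⟨rfl, h⟩; exact hne h
    have e2 : ¬(i = v₂ ∧ i = v₁) := by rintro ⟨rfl, h⟩; exact hne h.symm
    rw [pcoll]
    simp [e1, e2, hdiag]
  have crow : ∀ u, ∑ v, collapse v₁ v₂ y u v = 1 := by
    intro u
    rw [Finset.sum_congr rfl (fun v (_ : v ∈ univ) => pcoll u v)]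
    simp only [Finset.sum_add_distrib, sum_ite_and₂, sum_ite_and₁]
    have hry : ∑ v : Fin n, y u.castSucc v.castSucc = 1 - y u.castSucc (Fin.last n) := by
      have h := hrow u.castSucc
      rw [Fin.sum_univ_castSucc (f := fun j => y u.castSucc j)] at h
      linarith
    rw [hry, pcl u]
    by_cases e1 : u = v₁
    · subst e1; simp [hne]
    · by_cases e2 : u = v₂
      · subst e2; simp [Ne.symm hne, hb1]
      · simp [e1, e2]
  have ccol : ∀ v, ∑ u, collapse v₁ v₂ y u v = 1 := by
    intro v
    rw [Finset.sum_congr rfl (fun u (_ : u ∈ univ) => pcoll u v)]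
    simp only [Finset.sum_add_distrib, sum_ite_and₂, sum_ite_and₁]
    have hcy : ∑ u : Fin n, y u.castSucc v.castSucc = 1 - y (Fin.last n) v.castSucc := by
      have h := hcol v.castSucc
      rw [Fin.sum_univ_castSucc (f := fun i => y i v.castSucc)] at h
      linarith
    rw [hcy, plc v]
    by_cases e2 : v = v₂
    · subst e2; simp [Ne.symm hne, hc1]
    · by_cases e1 : v = v₁
      · subst e1; simp [hne, hd1]
      · simp [e1, e2]
  have csub : ∀ T : Finset (Fin n), 2 ≤ T.card → T.card ≤ n - 2 →
      1 ≤ ∑ i ∈ T, ∑ j ∈ Tᶜ, collapse v₁ v₂ y i j := by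
    intro T hT2 hTn
    rw [sum_compl_eq _ crow T]
    have hinner : ∑ i ∈ T, ∑ j ∈ T, collapse v₁ v₂ y i j
        = (∑ u ∈ T, ∑ v ∈ T, y u.castSucc v.castSucc)
          + (if v₁ ∈ T ∧ v₂ ∈ T then a else 0) + (if v₂ ∈ T ∧ v₁ ∈ T then 1 - a else 0) := by
      rw [Finset.sum_congr rfl (fun i (hi : i ∈ T) =>
        Finset.sum_congr rfl (fun j (hj : j ∈ T) => pcoll i j))]
      simp only [Finset.sum_add_distrib, sum_sum_ite]
    rw [hinner]
    set S0 := T.image Fin.castSucc with hS0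
    have hinj : ∀ u ∈ T, ∀ v ∈ T, Fin.castSucc u = Fin.castSucc v → u = v :=
      fun u _ v _ h => Fin.castSucc_injective n h
    have hcard0 : S0.card = T.card := Finset.card_image_of_injective T (Fin.castSucc_injective n)
    have himg : ∑ i ∈ S0, ∑ j ∈ S0, y i j = ∑ u ∈ T, ∑ v ∈ T, y u.castSucc v.castSucc := by
      rw [hS0, Finset.sum_image hinj]
      exact Finset.sum_congr rfl (fun u _ => by rw [Finset.sum_image hinj])
    by_cases hboth : v₁ ∈ T ∧ v₂ ∈ T
    · have hlnot : Fin.last n ∉ S0 := by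
        rw [hS0]
        simp only [Finset.mem_image, not_exists]
        rintro u ⟨_, hu⟩
        exact (Fin.castSucc_lt_last u).ne hu
      have hcard1 : (insert (Fin.last n) S0).card = T.card + 1 := by
        rw [Finset.card_insert_of_notMem hlnot, hcard0]
      have hbound := inner_le_pred y hyP (insert (Fin.last n) S0) (by omega) (by omega)
      have hcomp : ∑ i ∈ insert (Fin.last n) S0, ∑ j ∈ insert (Fin.last n) S0, y i j
          = (∑ u ∈ T, ∑ v ∈ T, y u.castSucc v.castSucc) + 2 := by
        rw [Finset.sum_insert hlnot, Finset.sum_insert hlnot,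
          Finset.sum_congr rfl (fun i (_ : i ∈ S0) => Finset.sum_insert hlnot)]
        rw [Finset.sum_add_distrib, hdiag]
        have hA : ∑ j ∈ S0, y (Fin.last n) j = 1 := by
          rw [hS0, Finset.sum_image hinj,
            Finset.sum_congr rfl (fun v (_ : v ∈ T) => plc v),
            Finset.sum_add_distrib, Finset.sum_ite_eq' T v₂, Finset.sum_ite_eq' T v₁]
          simp only [hboth.1, hboth.2, if_true]
          linarith
        have hB : ∑ i ∈ S0, y i (Fin.last n) = 1 := by
          rw [hS0, Finset.sum_image hinj,
            Finset.sum_congr rfl (fun u (_ : u ∈ T) => pcl u),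
            Finset.sum_add_distrib, Finset.sum_ite_eq' T v₁, Finset.sum_ite_eq' T v₂]
          simp only [hboth.1, hboth.2, if_true]
          linarith
        rw [hA, hB, himg]
        ring
      rw [hcomp, hcard1] at hbound
      push_cast at hbound
      simp only [hboth, hboth.2, hboth.1, and_self, if_true]
      linarith
    · have hbound := inner_le_pred y hyP S0 (by omega) (by omega)
      rw [himg, hcard0] at hbound
      have hboth' : ¬(v₂ ∈ T ∧ v₁ ∈ T) := fun h => hboth ⟨h.2, h.1⟩
      simp only [hboth, hboth', if_false]
      linarith
  exact ⟨⟨cnn, cdiag, ccol, crow, csub⟩, hb1, hc1, hd1⟩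

/-- A vertex (extreme point) of the polytope. -/
def IsVertex (n : ℕ) (x : Fin n → Fin n → ℝ) : Prop :=
  PASEP n x ∧ ∀ y z : Fin n → Fin n → ℝ, ∀ μ : ℝ,
    PASEP n y → PASEP n z → 0 < μ → μ < 1 →
    (∀ i j, x i j = μ * y i j + (1 - μ) * z i j) → y = z

/-- If `x` is a vertex of `P_ASEP(n)` containing a `λ`-loop between `v₁` and
`v₂`, then `x' = x ↑^{v₃} (v₁,v₂)`, obtained by the `λ`-loop breaking procedure,
is a vertex of `P_ASEP(n+1)`. -/
theorem breakLoop_isVertex (n : ℕ) (x : Fin n → Fin n → ℝ) (hx : IsVertex n x)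
    (v₁ v₂ : Fin n) (hne : v₁ ≠ v₂) (lam : ℝ) (h0 : 0 < lam) (h1 : lam < 1)
    (ha : x v₁ v₂ = lam) (hb : x v₂ v₁ = 1 - lam) :
    IsVertex (n + 1) (breakLoop n x v₁ v₂ lam) := by
  obtain ⟨hxP, hext⟩ := hx
  obtain ⟨hnn, hdiag, hcol, hrow, hsub⟩ := hxP
  have hxP : PASEP n x := ⟨hnn, hdiag, hcol, hrow, hsub⟩
  have hn : 3 ≤ n := by
    by_contra hc
    have h2 : 2 ≤ n := by
      have h := Finset.card_le_univ ({v₁, v₂} : Finset (Fin n))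
      rw [Finset.card_pair hne] at h
      simpa using h
    have huniv : ({v₁, v₂} : Finset (Fin n)) = univ := by
      apply Finset.eq_univ_of_card
      rw [Finset.card_pair hne]
      simp only [Fintype.card_fin]
      omega
    have h := hrow v₁
    rw [← huniv, Finset.sum_pair hne, hdiag, ha] at h
    linarith
  refine ⟨breakLoop_mem hn x hxP v₁ v₂ hne lam h0 h1 ha hb, ?_⟩
  intro y z μ hy hz hμ0 hμ1 heq
  have hμ1' : 0 < 1 - μ := by linarith
  have hzero : ∀ i j, breakLoop n x v₁ v₂ lam i j = 0 → y i j = 0 ∧ z i j = 0 := by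
    intro i j h
    have he := heq i j
    rw [h] at he
    have hy0 := hy.1 i j
    have hz0 := hz.1 i j
    constructor <;> nlinarith
  have hy12 : y v₁.castSucc v₂.castSucc = 0 ∧ z v₁.castSucc v₂.castSucc = 0 :=
    hzero _ _ (by rw [bl_cc]; simp)
  have hy21 : y v₂.castSucc v₁.castSucc = 0 ∧ z v₂.castSucc v₁.castSucc = 0 :=
    hzero _ _ (by rw [bl_cc]; simp [Ne.symm hne])
  have hycl : ∀ u : Fin n, u ≠ v₁ → u ≠ v₂ →
      y u.castSucc (Fin.last n) = 0 ∧ z u.castSucc (Fin.last n) = 0 := by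
    intro u e1 e2
    exact hzero _ _ (by rw [bl_cl]; simp [e1, e2])
  have hylc : ∀ v : Fin n, v ≠ v₁ → v ≠ v₂ →
      y (Fin.last n) v.castSucc = 0 ∧ z (Fin.last n) v.castSucc = 0 := by
    intro v e1 e2
    exact hzero _ _ (by rw [bl_lc]; simp [e1, e2])
  obtain ⟨hPy, hyb, hyc, hyd⟩ := collapse_props hn v₁ v₂ hne y hy hy12.1 hy21.1
    (fun u e1 e2 => (hycl u e1 e2).1) (fun v e1 e2 => (hylc v e1 e2).1)
  obtain ⟨hPz, hzb, hzc, hzd⟩ := collapse_props hn v₁ v₂ hne z hz hy12.2 hy21.2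
    (fun u e1 e2 => (hycl u e1 e2).2) (fun v e1 e2 => (hylc v e1 e2).2)
  have hlam : lam = μ * y v₁.castSucc (Fin.last n) + (1 - μ) * z v₁.castSucc (Fin.last n) := by
    have h := heq v₁.castSucc (Fin.last n)
    rw [bl_cl, if_pos rfl] at h
    exact h
  have hdecomp : ∀ u v, x u v = μ * collapse v₁ v₂ y u v + (1 - μ) * collapse v₁ v₂ z u v := by
    intro u v
    unfold collapse
    by_cases e1 : u = v₁ ∧ v = v₂
    · obtain ⟨rfl, rfl⟩ := e1
      rw [if_pos (And.intro rfl rfl), if_pos (And.intro rfl rfl), ha]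
      exact hlam
    · by_cases e2 : u = v₂ ∧ v = v₁
      · obtain ⟨rfl, rfl⟩ := e2
        rw [if_neg e1, if_neg e1, if_pos (And.intro rfl rfl), if_pos (And.intro rfl rfl), hb]
        linarith
      · rw [if_neg e1, if_neg e1, if_neg e2, if_neg e2]
        have h := heq u.castSucc v.castSucc
        rw [bl_cc, if_neg e1, if_neg e2] at h
        exact h
  have hcc := hext (collapse v₁ v₂ y) (collapse v₁ v₂ z) μ hPy hPz hμ0 hμ1 hdecomp
  have haz : y v₁.castSucc (Fin.last n) = z v₁.castSucc (Fin.last n) := by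
    have h := congrFun (congrFun hcc v₁) v₂
    unfold collapse at h
    rw [if_pos (And.intro rfl rfl), if_pos (And.intro rfl rfl)] at h
    exact h
  funext i j
  induction i using Fin.lastCases with
  | last =>
      induction j using Fin.lastCases with
      | last => rw [hy.2.1, hz.2.1]
      | cast v =>
          by_cases e2 : v = v₂
          · subst e2; rw [hyc, hzc, haz]
          · by_cases e1 : v = v₁
            · subst e1; rw [hyd, hzd, haz]
            · rw [(hylc v e1 e2).1, (hylc v e1 e2).2]
  | cast u =>
      induction j using Fin.lastCases with
      | last =>
          by_cases e1 : u = v₁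
          · subst e1; exact haz
          · by_cases e2 : u = v₂
            · subst e2; rw [hyb, hzb, haz]
            · rw [(hycl u e1 e2).1, (hycl u e1 e2).2]
      | cast v =>
          by_cases e1 : u = v₁ ∧ v = v₂
          · obtain ⟨rfl, rfl⟩ := e1; rw [hy12.1, hy12.2]
          · by_cases e2 : u = v₂ ∧ v = v₁
            · obtain ⟨rfl, rfl⟩ := e2; rw [hy21.1, hy21.2]
            · have h := congrFun (congrFun hcc u) v
              unfold collapse at h
              rw [if_neg e1, if_neg e2, if_neg e1, if_neg e2] at h
              exact h
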